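/- Let R = R_1 × ⋯ × R_s be a product of finite local rings where R_i has maximal ideal of order m_i. The number of triangles in the unitary Cayley graph G_R equals (1/6) · |R^×| · |R| · Π_{i=1}^{s} (|R_i^×| − m_i). -/

import Mathlib

open Polynomial

open Polynomial

/-- The unitary Cayley graph of a finite commutative ring `R`. -/
def unitaryCayley (R : Type*) [CommRing R] [Fintype R] [DecidableEq R] : SimpleGraph R where
  Adj x y := x ≠ y ∧ IsUnit (x - y)
  symm := ⟨by
    intro x y h
    exact ⟨h.1.symm, by simpa using h.2.neg⟩⟩
  loopless := ⟨fun x h => h.1 rfl⟩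

instance unitaryCayley.instDecidableRel (R : Type*) [CommRing R] [Fintype R] [DecidableEq R] :
    DecidableRel (unitaryCayley R).Adj := fun a b =>
  decidable_of_iff (a ≠ b ∧ ∃ c, (a - b) * c = 1)
    (by show _ ↔ (a ≠ b ∧ IsUnit (a - b)); exact and_congr Iff.rfl isUnit_iff_exists_inv.symm)

/-- An `r`-regular graph is Ramanujan if every adjacency eigenvalue other than `±r`
has absolute value at most `2 * sqrt (r - 1)`. -/
def IsRamanujan {V : Type*} [Fintype V] [DecidableEq V] (G : SimpleGraph V)
    [DecidableRel G.Adj] (r : ℕ) : Prop :=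
  ∀ μ ∈ (SimpleGraph.adjMatrix ℝ G).charpoly.roots,
    |μ| ≠ (r : ℝ) → |μ| ≤ 2 * Real.sqrt ((r : ℝ) - 1)

/-- The energy of a graph: the sum of absolute values of its adjacency eigenvalues. -/
noncomputable def graphEnergy {V : Type*} [Fintype V] [DecidableEq V] (G : SimpleGraph V)
    [DecidableRel G.Adj] : ℝ :=
  ((SimpleGraph.adjMatrix ℝ G).charpoly.roots.map (fun μ => |μ|)).sum


section Aux

open Finset

noncomputable def myUnitsEquiv (A : Type*) [Monoid A] : Aˣ ≃ {x : A // IsUnit x} where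
  toFun u := ⟨u, u.isUnit⟩
  invFun x := x.2.unit
  left_inv _ := Units.ext rfl
  right_inv x := Subtype.ext x.2.unit_spec

lemma pi_isUnit_iff {ι : Type*} {R : ι → Type*} [∀ i, Monoid (R i)] (f : ∀ i, R i) :
    IsUnit f ↔ ∀ i, IsUnit (f i) := by
  constructor
  · intro h i
    exact h.map (Pi.evalMonoidHom R i)
  · intro h
    exact ⟨⟨f, fun i => (((h i).unit)⁻¹ : (R i)ˣ), funext fun i => by simp,
      funext fun i => by simp⟩, rfl⟩

def piProdEquiv {ι : Type*} (f g : ι → Type*) :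
    ((∀ i, f i) × (∀ i, g i)) ≃ ∀ i, f i × g i where
  toFun p i := (p.1 i, p.2 i)
  invFun h := (fun i => (h i).1, fun i => (h i).2)
  left_inv _ := rfl
  right_inv _ := rfl

def prodSubtypeSnd {α β : Type*} {p : β → Prop} : {w : α × β // p w.2} ≃ α × {b // p b} where
  toFun w := (w.1.1, ⟨w.1.2, w.2⟩)
  invFun x := ⟨(x.1, x.2.1), x.2.2⟩
  left_inv := by rintro ⟨⟨a, b⟩, h⟩; rfl
  right_inv := by rintro ⟨a, ⟨b, h⟩⟩; rfl

lemma six_mul_triangles {V : Type*} [Fintype V] [DecidableEq V] (G : SimpleGraph V)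
    [DecidableRel G.Adj] :
    (Finset.univ.filter fun p : V × V × V =>
        G.Adj p.1 p.2.1 ∧ G.Adj p.2.1 p.2.2 ∧ G.Adj p.1 p.2.2).card
      = 6 * (G.cliqueFinset 3).card := by
  classical
  rw [Finset.card_eq_sum_card_fiberwise
    (f := fun p : V × V × V => ({p.1, p.2.1, p.2.2} : Finset V)) (t := G.cliqueFinset 3) ?_]
  · rw [Finset.sum_congr rfl ?_, Finset.sum_const, smul_eq_mul, mul_comm]
    intro t ht
    rw [SimpleGraph.mem_cliqueFinset_iff, SimpleGraph.is3Clique_iff] at ht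
    obtain ⟨x, y, z, hxy, hxz, hyz, rfl⟩ := ht
    have key : (Finset.univ.filter fun p : V × V × V =>
        (G.Adj p.1 p.2.1 ∧ G.Adj p.2.1 p.2.2 ∧ G.Adj p.1 p.2.2) ∧
          ({p.1, p.2.1, p.2.2} : Finset V) = {x, y, z}) =
        ({(x, y, z), (x, z, y), (y, x, z), (y, z, x), (z, x, y), (z, y, x)} :
          Finset (V × V × V)) := by
      ext ⟨a, b, c⟩
      simp only [Finset.mem_filter, Finset.mem_univ, true_and, Finset.mem_insert,
        Finset.mem_singleton, Prod.mk.injEq]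
      constructor
      · rintro ⟨⟨hab, hbc, hac⟩, heq⟩
        have ha : a ∈ ({x, y, z} : Finset V) := heq ▸ (by simp)
        have hb : b ∈ ({x, y, z} : Finset V) := heq ▸ (by simp)
        have hc : c ∈ ({x, y, z} : Finset V) := heq ▸ (by simp)
        have hab' := hab.ne; have hbc' := hbc.ne; have hac' := hac.ne
        simp only [Finset.mem_insert, Finset.mem_singleton] at ha hb hc
        rcases ha with rfl | rfl | rfl <;> rcases hb with rfl | rfl | rfl <;>
          rcases hc with rfl | rfl | rfl <;> simp_all
      · have hs1 : ({x, z, y} : Finset V) = {x, y, z} := by ext; simp; tauto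
        have hs2 : ({y, x, z} : Finset V) = {x, y, z} := by ext; simp; tauto
        have hs3 : ({y, z, x} : Finset V) = {x, y, z} := by ext; simp; tauto
        have hs4 : ({z, x, y} : Finset V) = {x, y, z} := by ext; simp; tauto
        have hs5 : ({z, y, x} : Finset V) = {x, y, z} := by ext; simp; tauto
        rintro (⟨rfl, rfl, rfl⟩ | ⟨rfl, rfl, rfl⟩ | ⟨rfl, rfl, rfl⟩ | ⟨rfl, rfl, rfl⟩ |
          ⟨rfl, rfl, rfl⟩ | ⟨rfl, rfl, rfl⟩) <;>
          refine ⟨⟨?_, ?_, ?_⟩, by first | rfl | assumption⟩ <;>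
          first
            | exact hxy | exact hxy.symm | exact hxz | exact hxz.symm
            | exact hyz | exact hyz.symm
    rw [Finset.filter_filter, key]
    have h1 := hxy.ne
    have h2 := hxz.ne
    have h3 := hyz.ne
    rw [Finset.card_insert_of_notMem (by simp [Prod.ext_iff]; tauto),
      Finset.card_insert_of_notMem (by simp [Prod.ext_iff]; tauto),
      Finset.card_insert_of_notMem (by simp [Prod.ext_iff]; tauto),
      Finset.card_insert_of_notMem (by simp [Prod.ext_iff]; tauto),
      Finset.card_insert_of_notMem (by simp [Prod.ext_iff]; tauto),
      Finset.card_singleton]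
  · rintro ⟨a, b, c⟩ hp
    simp only [Finset.coe_filter, Finset.mem_coe, Finset.mem_filter, Finset.mem_univ, true_and, Set.mem_setOf_eq] at hp ⊢
    rw [SimpleGraph.mem_cliqueFinset_iff, SimpleGraph.is3Clique_triple_iff]
    exact ⟨hp.1, hp.2.2, hp.2.1⟩

lemma local_nonunit_of {A : Type*} [CommRing A] [IsLocalRing A] {a b : A}
    (ha : IsUnit a) (hab : ¬ IsUnit (a + b)) : IsUnit b := by
  by_contra hb
  have h1 : a + b ∈ IsLocalRing.maximalIdeal A := hab
  have h2 : b ∈ IsLocalRing.maximalIdeal A := hb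
  have : a ∈ IsLocalRing.maximalIdeal A := by
    have := Ideal.sub_mem _ h1 h2
    simpa using this
  exact this ha

lemma local_count (A : Type*) [CommRing A] [IsLocalRing A] [Fintype A] [DecidableEq A] :
    Nat.card {q : A × A // IsUnit q.1 ∧ IsUnit q.2 ∧ IsUnit (q.1 + q.2)}
      + Nat.card Aˣ * Nat.card {x : A // ¬ IsUnit x}
      = Nat.card Aˣ * Nat.card Aˣ := by
  classical
  have hu : Nat.card Aˣ = Fintype.card {x : A // IsUnit x} := by
    rw [Nat.card_congr (myUnitsEquiv A), Nat.card_eq_fintype_card]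
  have e2 : {q : A × A // IsUnit q.1 ∧ ¬ IsUnit (q.1 + q.2)}
      ≃ {x : A // IsUnit x} × {x : A // ¬ IsUnit x} :=
    { toFun := fun q => (⟨q.1.1, q.2.1⟩, ⟨q.1.1 + q.1.2, q.2.2⟩)
      invFun := fun x => ⟨(x.1.1, x.2.1 - x.1.1), ⟨x.1.2, by simpa using x.2.2⟩⟩
      left_inv := by rintro ⟨⟨a, b⟩, h⟩; simp
      right_inv := by rintro ⟨⟨a, ha⟩, ⟨c, hc⟩⟩; simp }
  have e3 : {q : A × A // IsUnit q.1 ∧ IsUnit q.2}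
      ≃ {x : A // IsUnit x} × {x : A // IsUnit x} := Equiv.subtypeProdEquivProd
  have split := Finset.card_filter_add_card_filter_not
    (s := Finset.univ.filter fun q : A × A => IsUnit q.1 ∧ IsUnit q.2)
    (p := fun q : A × A => IsUnit (q.1 + q.2))
  simp only [Finset.filter_filter] at split
  have hA : (Finset.univ.filter fun q : A × A =>
      (IsUnit q.1 ∧ IsUnit q.2) ∧ IsUnit (q.1 + q.2)).card
      = Nat.card {q : A × A // IsUnit q.1 ∧ IsUnit q.2 ∧ IsUnit (q.1 + q.2)} := by
    rw [Nat.card_eq_fintype_card, Fintype.card_subtype]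
    congr 1; apply Finset.filter_congr; intro q _; tauto
  have hB : (Finset.univ.filter fun q : A × A =>
      (IsUnit q.1 ∧ IsUnit q.2) ∧ ¬ IsUnit (q.1 + q.2)).card
      = Nat.card Aˣ * Nat.card {x : A // ¬ IsUnit x} := by
    have : (Finset.univ.filter fun q : A × A =>
        (IsUnit q.1 ∧ IsUnit q.2) ∧ ¬ IsUnit (q.1 + q.2))
        = (Finset.univ.filter fun q : A × A => IsUnit q.1 ∧ ¬ IsUnit (q.1 + q.2)) := by
      apply Finset.filter_congr; intro q _
      constructor
      · tauto
      · rintro ⟨h1, h2⟩; exact ⟨⟨h1, local_nonunit_of h1 h2⟩, h2⟩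
    rw [this, ← Fintype.card_subtype, ← Nat.card_eq_fintype_card, Nat.card_congr e2,
      Nat.card_prod, hu, Nat.card_eq_fintype_card]
  have hC : (Finset.univ.filter fun q : A × A => IsUnit q.1 ∧ IsUnit q.2).card
      = Nat.card Aˣ * Nat.card Aˣ := by
    rw [← Fintype.card_subtype, ← Nat.card_eq_fintype_card, Nat.card_congr e3,
      Nat.card_prod, hu, Nat.card_eq_fintype_card]
  rw [hA, hB, hC] at split
  exact split

def tripleEquiv (A : Type*) [CommRing A] : (A × A × A) ≃ (A × (A × A)) where
  toFun p := (p.1, p.1 - p.2.1, p.2.1 - p.2.2)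
  invFun w := (w.1, w.1 - w.2.1, w.1 - w.2.1 - w.2.2)
  left_inv := by rintro ⟨x, y, z⟩; simp [Prod.ext_iff]
  right_inv := by rintro ⟨x, a, b⟩; simp [Prod.ext_iff]

lemma triangle_count (A : Type*) [CommRing A] [Fintype A] [DecidableEq A] [Nontrivial A] :
    (Finset.univ.filter fun p : A × A × A =>
        (unitaryCayley A).Adj p.1 p.2.1 ∧ (unitaryCayley A).Adj p.2.1 p.2.2 ∧
          (unitaryCayley A).Adj p.1 p.2.2).card
      = Fintype.card A * Nat.card {q : A × A // IsUnit q.1 ∧ IsUnit q.2 ∧ IsUnit (q.1 + q.2)} := by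
  classical
  have adj_iff : ∀ x y : A, (unitaryCayley A).Adj x y ↔ IsUnit (x - y) := by
    intro x y
    constructor
    · exact And.right
    · intro h
      refine ⟨?_, h⟩
      rintro rfl
      rw [sub_self] at h
      exact not_isUnit_zero h
  have E : {p : A × A × A // (unitaryCayley A).Adj p.1 p.2.1 ∧
        (unitaryCayley A).Adj p.2.1 p.2.2 ∧ (unitaryCayley A).Adj p.1 p.2.2}
      ≃ A × {q : A × A // IsUnit q.1 ∧ IsUnit q.2 ∧ IsUnit (q.1 + q.2)} := by
    refine (Equiv.subtypeEquiv (tripleEquiv A) ?_).trans prodSubtypeSnd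
    rintro ⟨x, y, z⟩
    simp only [tripleEquiv, Equiv.coe_fn_mk, adj_iff, sub_add_sub_cancel]
  have : (Finset.univ.filter fun p : A × A × A =>
        (unitaryCayley A).Adj p.1 p.2.1 ∧ (unitaryCayley A).Adj p.2.1 p.2.2 ∧
          (unitaryCayley A).Adj p.1 p.2.2).card
      = Nat.card {p : A × A × A // (unitaryCayley A).Adj p.1 p.2.1 ∧
          (unitaryCayley A).Adj p.2.1 p.2.2 ∧ (unitaryCayley A).Adj p.1 p.2.2} := by
    rw [Nat.card_eq_fintype_card, Fintype.card_subtype]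
  rw [this, Nat.card_congr E, Nat.card_prod, Nat.card_eq_fintype_card]

end Aux

/-- Let `R = R₁ × ⋯ × R_s` be a product of finite local rings, where `Rᵢ` has maximal
ideal of order `mᵢ`. Then the number of triangles of `G_R` equals
`(1/6) · |R^×| · |R| · Π_i (|Rᵢ^×| - mᵢ)`. -/
theorem stmt_19 (s : ℕ) (hs : 0 < s) (R : Fin s → Type*) [∀ i, CommRing (R i)]
    [∀ i, IsLocalRing (R i)] [∀ i, Fintype (R i)] [∀ i, DecidableEq (R i)]
    (M : ∀ i, Ideal (R i)) (hM : ∀ i, (M i).IsMaximal)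
    (m : Fin s → ℕ) (hm : ∀ i, m i = Nat.card (M i)) :
    (((unitaryCayley (∀ i, R i)).cliqueFinset 3).card : ℝ) =
      (1 / 6 : ℝ) * (Nat.card (∀ i, R i)ˣ : ℝ) * (Fintype.card (∀ i, R i) : ℝ) *
        ∏ i, ((Nat.card (R i)ˣ : ℝ) - (m i : ℝ)) := by
  classical
  set P := ∀ i, R i with hP
  haveI : Nontrivial P := ⟨0, 1, fun h => zero_ne_one (congrFun h ⟨0, hs⟩)⟩
  -- six times the triangle count
  have h6 := six_mul_triangles (unitaryCayley P)
  have hT := triangle_count P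
  -- the pair count over the product splits as a product
  have epair : {q : P × P // IsUnit q.1 ∧ IsUnit q.2 ∧ IsUnit (q.1 + q.2)}
      ≃ ∀ i, {q : R i × R i // IsUnit q.1 ∧ IsUnit q.2 ∧ IsUnit (q.1 + q.2)} := by
    refine (Equiv.subtypeEquiv (piProdEquiv R R) ?_).trans (Equiv.subtypePiEquivPi)
    rintro ⟨f, g⟩
    constructor
    · rintro ⟨h1, h2, h3⟩ i
      exact ⟨(pi_isUnit_iff f).mp h1 i, (pi_isUnit_iff g).mp h2 i,
        (pi_isUnit_iff (f + g)).mp h3 i⟩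
    · intro h
      exact ⟨(pi_isUnit_iff f).mpr fun i => (h i).1, (pi_isUnit_iff g).mpr fun i => (h i).2.1,
        (pi_isUnit_iff (f + g)).mpr fun i => (h i).2.2⟩
  have hpair : Nat.card {q : P × P // IsUnit q.1 ∧ IsUnit q.2 ∧ IsUnit (q.1 + q.2)}
      = ∏ i, Nat.card {q : R i × R i // IsUnit q.1 ∧ IsUnit q.2 ∧ IsUnit (q.1 + q.2)} := by
    rw [Nat.card_congr epair, Nat.card_pi]
  -- units of the product
  have hunits : Nat.card Pˣ = ∏ i, Nat.card (R i)ˣ := by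
    have e : Pˣ ≃ ∀ i, {x : R i // IsUnit x} :=
      (myUnitsEquiv P).trans ((Equiv.subtypeEquivRight fun f => pi_isUnit_iff f).trans
        Equiv.subtypePiEquivPi)
    rw [Nat.card_congr e, Nat.card_pi]
    exact Finset.prod_congr rfl fun i _ => (Nat.card_congr (myUnitsEquiv (R i))).symm
  -- maximal ideal cardinalities
  have hmcard : ∀ i, m i = Nat.card {x : R i // ¬ IsUnit x} := by
    intro i
    rw [hm i]
    apply Nat.card_congr
    refine Equiv.subtypeEquivRight fun x => ?_
    rw [IsLocalRing.eq_maximalIdeal (hM i)]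
    exact IsLocalRing.mem_maximalIdeal x
  -- the per-factor count, in ℝ
  have hfac : ∀ i, (Nat.card {q : R i × R i // IsUnit q.1 ∧ IsUnit q.2 ∧ IsUnit (q.1 + q.2)} : ℝ)
      = (Nat.card (R i)ˣ : ℝ) * ((Nat.card (R i)ˣ : ℝ) - (m i : ℝ)) := by
    intro i
    have h := local_count (R i)
    have : (Nat.card {q : R i × R i // IsUnit q.1 ∧ IsUnit q.2 ∧ IsUnit (q.1 + q.2)} : ℝ)
        + (Nat.card (R i)ˣ : ℝ) * (Nat.card {x : R i // ¬ IsUnit x} : ℝ)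
        = (Nat.card (R i)ˣ : ℝ) * (Nat.card (R i)ˣ : ℝ) := by
      exact_mod_cast congrArg (fun n : ℕ => (n : ℝ)) h
    rw [hmcard i]
    linarith [this]
  -- put everything together
  rw [hT, hpair] at h6
  have h6' : (6 : ℝ) * ((unitaryCayley P).cliqueFinset 3).card
      = (Fintype.card P : ℝ) * ∏ i,
          (Nat.card {q : R i × R i // IsUnit q.1 ∧ IsUnit q.2 ∧ IsUnit (q.1 + q.2)} : ℝ) := by
    have := congrArg (fun n : ℕ => (n : ℝ)) h6
    push_cast at this
    linarith [this]
  have hprod : (∏ i, (Nat.card {q : R i × R i // IsUnit q.1 ∧ IsUnit q.2 ∧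
        IsUnit (q.1 + q.2)} : ℝ))
      = (∏ i, (Nat.card (R i)ˣ : ℝ)) * ∏ i, ((Nat.card (R i)ˣ : ℝ) - (m i : ℝ)) := by
    rw [← Finset.prod_mul_distrib]
    exact Finset.prod_congr rfl fun i _ => hfac i
  have hcliq : (((unitaryCayley P).cliqueFinset 3).card : ℝ)
      = (1 / 6 : ℝ) * ((Fintype.card P : ℝ) *
          ((∏ i, (Nat.card (R i)ˣ : ℝ)) * ∏ i, ((Nat.card (R i)ˣ : ℝ) - (m i : ℝ)))) := by
    rw [← hprod]
    linarith [h6']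
  rw [hcliq, hunits]
  push_cast
  ring
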